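/- Suppose U₋₁ : (0,δ)×ℝⁿ → ℝ^d is twice continuously differentiable, U₀, U₁, …, U_n : (0,δ)×ℝⁿ → ℝ^d are continuously differentiable, and the tuple (U₋₁, U₀, U₁, …, U_n) satisfies the first-order system (E₋₁), (E₀), (E_a). Define C_a := U_a − t·∂_a U₋₁ for a = 1,…,n. Then Σ_b Gᵃᵇ·(D C_b − (1+α)·C_b) = 0 holds on (0,δ)×ℝⁿ for each a; in particular, if the n×n matrix (Gᵃᵇ(t,x)) is invertible at every point, then D C_a − (1+α)·C_a = 0 for each a = 1,…,n. -/

import Mathlib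

open Topology Filter


/-- The Fuchsian time derivative `D u = t·∂_t u` for functions of `(t, x) ∈ ℝ × ℝⁿ`. -/
noncomputable def Dop {n d : ℕ} (u : ℝ × (Fin n → ℝ) → Fin d → ℝ)
    (p : ℝ × (Fin n → ℝ)) : Fin d → ℝ :=
  p.1 • deriv (fun s => u (s, p.2)) p.1

/-- The spatial partial derivative `∂_a u` for functions of `(t, x) ∈ ℝ × ℝⁿ`. -/
noncomputable def pd {n d : ℕ} (a : Fin n) (u : ℝ × (Fin n → ℝ) → Fin d → ℝ)
    (p : ℝ × (Fin n → ℝ)) : Fin d → ℝ :=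
  deriv (fun s => u (p.1, Function.update p.2 a s)) (p.2 a)

section aux
variable {n : ℕ} {E : Type*} [NormedAddCommGroup E] [NormedSpace ℝ E]

lemma aux_hasDerivAt_t (u : ℝ × (Fin n → ℝ) → E) (p : ℝ × (Fin n → ℝ))
    (hu : DifferentiableAt ℝ u p) :
    HasDerivAt (fun s => u (s, p.2)) (fderiv ℝ u p (1, 0)) p.1 := by
  have hc : HasDerivAt (fun s : ℝ => ((s, p.2) : ℝ × (Fin n → ℝ))) (1, 0) p.1 :=
    (hasDerivAt_id p.1).prodMk (hasDerivAt_const _ _)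
  exact hu.hasFDerivAt.comp_hasDerivAt p.1 hc

lemma aux_hasDerivAt_x (a : Fin n) (u : ℝ × (Fin n → ℝ) → E) (p : ℝ × (Fin n → ℝ))
    (hu : DifferentiableAt ℝ u p) :
    HasDerivAt (fun s => u (p.1, Function.update p.2 a s))
      (fderiv ℝ u p (0, Pi.single a 1)) (p.2 a) := by
  have hupd : HasDerivAt (fun s : ℝ => Function.update p.2 a s) (Pi.single a 1) (p.2 a) := by
    rw [hasDerivAt_pi]
    intro i
    by_cases hi : i = a
    · subst hi
      simpa [Function.update_apply] using hasDerivAt_id' (p.2 i)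
    · simpa [Function.update_apply, hi, Pi.single_apply] using hasDerivAt_const (p.2 a) (p.2 i)
  have hc : HasDerivAt (fun s : ℝ => ((p.1, Function.update p.2 a s) : ℝ × (Fin n → ℝ)))
      ((0 : ℝ), Pi.single a 1) (p.2 a) := (hasDerivAt_const _ _).prodMk hupd
  have hfd : HasFDerivAt u (fderiv ℝ u p) (p.1, Function.update p.2 a (p.2 a)) := by
    rw [Function.update_eq_self]; exact hu.hasFDerivAt
  exact hfd.comp_hasDerivAt _ hc

end aux

lemma pd_eq {n d : ℕ} (a : Fin n) (u : ℝ × (Fin n → ℝ) → Fin d → ℝ) (p : ℝ × (Fin n → ℝ))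
    (hu : DifferentiableAt ℝ u p) : pd a u p = fderiv ℝ u p (0, Pi.single a 1) :=
  (aux_hasDerivAt_x a u p hu).deriv

lemma dop_eq {n d : ℕ} (u : ℝ × (Fin n → ℝ) → Fin d → ℝ) (p : ℝ × (Fin n → ℝ))
    (hu : DifferentiableAt ℝ u p) : Dop u p = p.1 • fderiv ℝ u p (1, 0) := by
  unfold Dop; rw [(aux_hasDerivAt_t u p hu).deriv]


lemma constraint_key (n d : ℕ) (hn : 0 < n) (hd : 0 < d) (δ α : ℝ) (hδ : 0 < δ)
    (Um1 U0 : ℝ × (Fin n → ℝ) → Fin d → ℝ)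
    (UA : Fin n → ℝ × (Fin n → ℝ) → Fin d → ℝ)
    (hUm1 : ContDiffOn ℝ 2 Um1 (Set.Ioo (0 : ℝ) δ ×ˢ (Set.univ : Set (Fin n → ℝ))))
    (hU0 : ContDiffOn ℝ 1 U0 (Set.Ioo (0 : ℝ) δ ×ˢ (Set.univ : Set (Fin n → ℝ))))
    (hUA : ∀ a : Fin n,
      ContDiffOn ℝ 1 (UA a) (Set.Ioo (0 : ℝ) δ ×ˢ (Set.univ : Set (Fin n → ℝ))))
    (hEm1 : ∀ p ∈ Set.Ioo (0 : ℝ) δ ×ˢ (Set.univ : Set (Fin n → ℝ)),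
      Dop Um1 p - α • Um1 p - U0 p = 0) :
    ∀ p ∈ Set.Ioo (0 : ℝ) δ ×ˢ (Set.univ : Set (Fin n → ℝ)), ∀ b : Fin n,
      Dop (fun q => UA b q - q.1 • pd b Um1 q) p
          - (1 + α) • (UA b p - p.1 • pd b Um1 p)
        = Dop (UA b) p - p.1 • pd b U0 p - (1 + α) • UA b p := by
  have hSopen : IsOpen (Set.Ioo (0 : ℝ) δ ×ˢ (Set.univ : Set (Fin n → ℝ))) :=
    isOpen_Ioo.prod isOpen_univ
  intro p hp b
  have hmem : (Set.Ioo (0 : ℝ) δ ×ˢ (Set.univ : Set (Fin n → ℝ))) ∈ 𝓝 p := hSopen.mem_nhds hp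
  have hUm1p : ContDiffAt ℝ 2 Um1 p := hUm1.contDiffAt hmem
  have hUm1d : DifferentiableAt ℝ Um1 p := hUm1p.differentiableAt (by norm_num)
  have hU0d : DifferentiableAt ℝ U0 p := (hU0.contDiffAt hmem).differentiableAt one_ne_zero
  have hUAd : DifferentiableAt ℝ (UA b) p := ((hUA b).contDiffAt hmem).differentiableAt one_ne_zero
  have hFd : DifferentiableAt ℝ (fderiv ℝ Um1) p :=
    (hUm1p.fderiv_right (m := 1) (by norm_num)).differentiableAt one_ne_zero
  have hsymm := hUm1p.isSymmSndFDerivAt (by simp [minSmoothness_of_isRCLikeNormedField])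
  have hev : ∀ᶠ q in 𝓝 p, DifferentiableAt ℝ Um1 q := by
    filter_upwards [hmem] with q hq
    exact (hUm1.contDiffAt (hSopen.mem_nhds hq)).differentiableAt (by norm_num)
  -- derivative in t of pd b Um1
  have hbase : HasDerivAt (fun s => fderiv ℝ Um1 (s, p.2)) (fderiv ℝ (fderiv ℝ Um1) p (1, 0)) p.1 :=
    aux_hasDerivAt_t _ p hFd
  have h2' : HasDerivAt (fun s => fderiv ℝ Um1 (s, p.2) (0, Pi.single b 1))
      (fderiv ℝ (fderiv ℝ Um1) p (1, 0) (0, Pi.single b 1)) p.1 := by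
    simpa using hbase.clm_apply (hasDerivAt_const _ ((0 : ℝ), Pi.single b 1))
  have heq : (fun s => pd b Um1 (s, p.2)) =ᶠ[𝓝 p.1]
      (fun s => fderiv ℝ Um1 (s, p.2) (0, Pi.single b 1)) := by
    have hcont : ContinuousAt (fun s : ℝ => ((s, p.2) : ℝ × (Fin n → ℝ))) p.1 :=
      (continuous_id.prodMk continuous_const).continuousAt
    filter_upwards [hcont.eventually hev] with s hs
    exact pd_eq b Um1 (s, p.2) hs
  have h2 : HasDerivAt (fun s => pd b Um1 (s, p.2))
      (fderiv ℝ (fderiv ℝ Um1) p (1, 0) (0, Pi.single b 1)) p.1 :=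
    h2'.congr_of_eventuallyEq heq
  -- the identity t·∂_b∂_t Um1 = α·∂_b Um1 + ∂_b U0 from (E₋₁)
  have hbx : HasDerivAt (fun s => fderiv ℝ Um1 (p.1, Function.update p.2 b s))
      (fderiv ℝ (fderiv ℝ Um1) p (0, Pi.single b 1)) (p.2 b) := aux_hasDerivAt_x b _ p hFd
  have hL : HasDerivAt (fun s => p.1 • (fderiv ℝ Um1 (p.1, Function.update p.2 b s) (1, 0)))
      (p.1 • (fderiv ℝ (fderiv ℝ Um1) p (0, Pi.single b 1) (1, 0))) (p.2 b) := by
    have := hbx.clm_apply (hasDerivAt_const _ ((1 : ℝ), (0 : Fin n → ℝ)))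
    have h3 := this.const_smul p.1
    simp only [map_zero, add_zero] at h3
    exact h3
  have hR : HasDerivAt (fun s => α • Um1 (p.1, Function.update p.2 b s)
        + U0 (p.1, Function.update p.2 b s))
      (α • fderiv ℝ Um1 p (0, Pi.single b 1) + fderiv ℝ U0 p (0, Pi.single b 1)) (p.2 b) :=
    ((aux_hasDerivAt_x b Um1 p hUm1d).const_smul α).add (aux_hasDerivAt_x b U0 p hU0d)
  have hfun : (fun s => p.1 • (fderiv ℝ Um1 (p.1, Function.update p.2 b s) (1, 0)))
      = (fun s => α • Um1 (p.1, Function.update p.2 b s) + U0 (p.1, Function.update p.2 b s)) := by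
    funext s
    have hqS : ((p.1, Function.update p.2 b s) : ℝ × (Fin n → ℝ)) ∈
        Set.Ioo (0 : ℝ) δ ×ˢ (Set.univ : Set (Fin n → ℝ)) := ⟨hp.1, trivial⟩
    have hqd : DifferentiableAt ℝ Um1 (p.1, Function.update p.2 b s) :=
      (hUm1.contDiffAt (hSopen.mem_nhds hqS)).differentiableAt (by norm_num)
    have hE := hEm1 _ hqS
    rw [sub_sub, sub_eq_zero] at hE
    calc p.1 • (fderiv ℝ Um1 (p.1, Function.update p.2 b s) (1, 0))
        = Dop Um1 (p.1, Function.update p.2 b s) := (dop_eq Um1 _ hqd).symm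
      _ = α • Um1 (p.1, Function.update p.2 b s) + U0 (p.1, Function.update p.2 b s) := hE
  have E1 : p.1 • (fderiv ℝ (fderiv ℝ Um1) p (0, Pi.single b 1) (1, 0))
      = α • pd b Um1 p + pd b U0 p := by
    rw [pd_eq b Um1 p hUm1d, pd_eq b U0 p hU0d]
    exact ((hfun ▸ hL).unique hR)
  have hsym : fderiv ℝ (fderiv ℝ Um1) p (1, 0) (0, Pi.single b 1)
      = fderiv ℝ (fderiv ℝ Um1) p (0, Pi.single b 1) (1, 0) := hsymm _ _
  have hsmul : HasDerivAt (fun s => s • pd b Um1 (s, p.2))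
      (p.1 • (fderiv ℝ (fderiv ℝ Um1) p (1, 0) (0, Pi.single b 1)) + pd b Um1 p) p.1 := by
    have h3 := (hasDerivAt_id' p.1).smul h2
    simp only [one_smul] at h3
    exact h3
  have hDCA : HasDerivAt (fun s => UA b (s, p.2) - s • pd b Um1 (s, p.2))
      (fderiv ℝ (UA b) p (1, 0)
        - (p.1 • (fderiv ℝ (fderiv ℝ Um1) p (1, 0) (0, Pi.single b 1)) + pd b Um1 p)) p.1 :=
    (aux_hasDerivAt_t (UA b) p hUAd).sub hsmul
  have hDopCA : Dop (fun q => UA b q - q.1 • pd b Um1 q) p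
      = Dop (UA b) p - (p.1 • (α • pd b Um1 p + pd b U0 p) + p.1 • pd b Um1 p) := by
    unfold Dop
    rw [hDCA.deriv, (aux_hasDerivAt_t (UA b) p hUAd).deriv, hsym, E1]
    module
  rw [hDopCA]
  module

/-- Appendix A, constraint propagation: for a solution `(U₋₁, U₀, U₁, …, U_n)` of the
first-order system (E₋₁), (E₀), (E_a), the constraint quantities `C_a := U_a − t·∂_a U₋₁`
satisfy `Σ_b Gᵃᵇ·(D C_b − (1+α)·C_b) = 0`; in particular, if the matrix `(Gᵃᵇ)` is
invertible at every point of the domain, then `D C_a − (1+α)·C_a = 0` for each `a`. -/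
theorem stmt_11 (n d : ℕ) (hn : 0 < n) (hd : 0 < d) (δ α : ℝ) (hδ : 0 < δ)
    (G0 : Fin n → ℝ × (Fin n → ℝ) → ℝ)
    (G : Fin n → Fin n → ℝ × (Fin n → ℝ) → ℝ)
    (hGsymm : ∀ a b : Fin n, G a b = G b a)
    (h : ℝ × (Fin n → ℝ) → Fin d → ℝ)
    (Um1 U0 : ℝ × (Fin n → ℝ) → Fin d → ℝ)
    (UA : Fin n → ℝ × (Fin n → ℝ) → Fin d → ℝ)
    (hUm1 : ContDiffOn ℝ 2 Um1 (Set.Ioo (0 : ℝ) δ ×ˢ (Set.univ : Set (Fin n → ℝ))))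
    (hU0 : ContDiffOn ℝ 1 U0 (Set.Ioo (0 : ℝ) δ ×ˢ (Set.univ : Set (Fin n → ℝ))))
    (hUA : ∀ a : Fin n,
      ContDiffOn ℝ 1 (UA a) (Set.Ioo (0 : ℝ) δ ×ˢ (Set.univ : Set (Fin n → ℝ))))
    (hEm1 : ∀ p ∈ Set.Ioo (0 : ℝ) δ ×ˢ (Set.univ : Set (Fin n → ℝ)),
      Dop Um1 p - α • Um1 p - U0 p = 0)
    (hE0 : ∀ p ∈ Set.Ioo (0 : ℝ) δ ×ˢ (Set.univ : Set (Fin n → ℝ)),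
      Dop U0 p - ∑ a : Fin n, (2 * G0 a p) • (p.1 • pd a U0 p)
          - ∑ a : Fin n, ∑ b : Fin n, G a b p • (p.1 • pd a (UA b) p)
          - (α * (1 - α)) • Um1 p + (α - 1) • U0 p
        = h p + ∑ a : Fin n, (2 * α * G0 a p) • UA a p)
    (hEa : ∀ p ∈ Set.Ioo (0 : ℝ) δ ×ˢ (Set.univ : Set (Fin n → ℝ)), ∀ a : Fin n,
      ∑ b : Fin n, G a b p •
        (Dop (UA b) p - p.1 • pd b U0 p - (1 + α) • UA b p) = 0) :
    (let CA : Fin n → ℝ × (Fin n → ℝ) → Fin d → ℝ :=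
       fun a q => UA a q - q.1 • pd a Um1 q
     (∀ p ∈ Set.Ioo (0 : ℝ) δ ×ˢ (Set.univ : Set (Fin n → ℝ)), ∀ a : Fin n,
        ∑ b : Fin n, G a b p • (Dop (CA b) p - (1 + α) • CA b p) = 0) ∧
     ((∀ p ∈ Set.Ioo (0 : ℝ) δ ×ˢ (Set.univ : Set (Fin n → ℝ)),
         IsUnit (Matrix.of (fun a b : Fin n => G a b p))) →
       ∀ p ∈ Set.Ioo (0 : ℝ) δ ×ˢ (Set.univ : Set (Fin n → ℝ)), ∀ a : Fin n,
         Dop (CA a) p - (1 + α) • CA a p = 0)) := by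
  have hSopen : IsOpen (Set.Ioo (0 : ℝ) δ ×ˢ (Set.univ : Set (Fin n → ℝ))) :=
    isOpen_Ioo.prod isOpen_univ
  have key := constraint_key n d hn hd δ α hδ Um1 U0 UA hUm1 hU0 hUA hEm1
  intro CA
  have part1 : ∀ p ∈ Set.Ioo (0 : ℝ) δ ×ˢ (Set.univ : Set (Fin n → ℝ)), ∀ a : Fin n,
      ∑ b : Fin n, G a b p • (Dop (CA b) p - (1 + α) • CA b p) = 0 := by
    intro p hp a
    have hre : ∀ b : Fin n, Dop (CA b) p - (1 + α) • CA b p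
        = Dop (UA b) p - p.1 • pd b U0 p - (1 + α) • UA b p := fun b => key p hp b
    rw [Finset.sum_congr rfl fun b _ => by rw [hre b]]
    exact hEa p hp a
  refine ⟨part1, ?_⟩
  intro hinv p hp a
  set M := Matrix.of (fun a b : Fin n => G a b p) with hM
  obtain ⟨u, hu⟩ := hinv p hp
  funext i
  have hMw : M.mulVec (fun b => (Dop (CA b) p - (1 + α) • CA b p) i) = 0 := by
    funext a'
    have := congrFun (part1 p hp a') i
    simpa [Matrix.mulVec, dotProduct, Finset.sum_apply, Pi.smul_apply,
      smul_eq_mul, hM] using this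
  have hu' : (↑u : Matrix (Fin n) (Fin n) ℝ) = M := by rw [hM]; exact hu
  have h1 : ((↑u⁻¹ : Matrix (Fin n) (Fin n) ℝ) * M) = 1 := by rw [← hu']; exact u.inv_mul
  have hw : (fun b => (Dop (CA b) p - (1 + α) • CA b p) i) = 0 := by
    calc (fun b => (Dop (CA b) p - (1 + α) • CA b p) i)
        = ((↑u⁻¹ : Matrix (Fin n) (Fin n) ℝ) * M).mulVec
            (fun b => (Dop (CA b) p - (1 + α) • CA b p) i) := by
          rw [h1, Matrix.one_mulVec]
      _ = (↑u⁻¹ : Matrix (Fin n) (Fin n) ℝ).mulVec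
            (M.mulVec (fun b => (Dop (CA b) p - (1 + α) • CA b p) i)) := by
          rw [← Matrix.mulVec_mulVec]
      _ = 0 := by rw [hMw, Matrix.mulVec_zero]
  simpa using congrFun hw a
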